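/- Let X be a real Banach space, F a nonempty closed bounded subset, and x ∈ X with Q_F(x) ≠ ∅. If Q_F(x) is compact and F is strongly remotal at x (for every ε>0 there is δ>0 with Q_F(x,δ) ⊆ Q_F(x)+εB_X), then every maximizing sequence in F for x has a convergent subsequence (F is sup-compact at x). -/

import Mathlib

open Pointwise

open Filter Topology

noncomputable def farR {X : Type*} [NormedAddCommGroup X] (F : Set X) (x : X) : ℝ :=
  sSup ((fun y => ‖x - y‖) '' F)

def QF {X : Type*} [NormedAddCommGroup X] (F : Set X) (x : X) (δ : ℝ) : Set X :=
  {y ∈ F | farR F x - δ ≤ ‖x - y‖}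

theorem stmt10 {X : Type*} [NormedAddCommGroup X] [NormedSpace ℝ X] [CompleteSpace X]
    (F : Set X) (hne : F.Nonempty) (hcl : IsClosed F) (hbd : Bornology.IsBounded F)
    (x : X) (hrem : (QF F x 0).Nonempty)
    (hcpt : IsCompact (QF F x 0))
    (hsr : ∀ ε > 0, ∃ δ > 0, QF F x δ ⊆ QF F x 0 + Metric.closedBall (0 : X) ε) :
    ∀ y : ℕ → X, (∀ n, y n ∈ F) →
      Tendsto (fun n => ‖x - y n‖) atTop (𝓝 (farR F x)) →
      ∃ φ : ℕ → ℕ, StrictMono φ ∧ ∃ l, Tendsto (y ∘ φ) atTop (𝓝 l) := by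
  intro y hyF hyt
  -- nearest point in Q for each n
  have hq : ∀ n, ∃ q ∈ QF F x 0, Metric.infDist (y n) (QF F x 0) = dist (y n) q :=
    fun n => hcpt.exists_infDist_eq_dist hrem (y n)
  choose q hqQ hqd using hq
  -- infDist (y n) Q → 0
  have hd0 : Tendsto (fun n => Metric.infDist (y n) (QF F x 0)) atTop (𝓝 0) := by
    rw [Metric.tendsto_atTop]
    intro ε hε
    obtain ⟨δ, hδ, hsub⟩ := hsr (ε / 2) (by positivity)
    have hev : ∀ᶠ n in atTop, farR F x - δ ≤ ‖x - y n‖ :=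
      hyt.eventually (eventually_ge_nhds (show farR F x - δ < farR F x by linarith))
    obtain ⟨N, hN⟩ := hev.exists_forall_of_atTop
    refine ⟨N, fun n hn => ?_⟩
    have hmem : y n ∈ QF F x δ := ⟨hyF n, hN n hn⟩
    obtain ⟨a, ha, b, hb, hab⟩ := hsub hmem
    have hba : ‖y n - a‖ ≤ ε / 2 := by
      have : y n - a = b := by rw [← hab]; simp
      rw [this]
      simpa [Metric.mem_closedBall] using hb
    have hle : Metric.infDist (y n) (QF F x 0) ≤ ε / 2 := by
      calc Metric.infDist (y n) (QF F x 0) ≤ dist (y n) a := Metric.infDist_le_dist_of_mem ha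
        _ ≤ ε / 2 := by rwa [dist_eq_norm]
    have hnn : 0 ≤ Metric.infDist (y n) (QF F x 0) := Metric.infDist_nonneg
    rw [Real.dist_eq]
    rw [abs_sub_lt_iff]
    constructor <;> linarith
  -- extract convergent subsequence of q
  obtain ⟨l, _, φ, hφ, hql⟩ := hcpt.tendsto_subseq hqQ
  refine ⟨φ, hφ, l, ?_⟩
  have hdist : Tendsto (fun n => dist ((y ∘ φ) n) (q (φ n))) atTop (𝓝 0) := by
    have := hd0.comp hφ.tendsto_atTop
    simpa [Function.comp_def, hqd] using this
  have : Tendsto (fun n => dist ((y ∘ φ) n) l) atTop (𝓝 0) := by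
    have hsum : Tendsto (fun n => dist ((y ∘ φ) n) (q (φ n)) + dist (q (φ n)) l)
        atTop (𝓝 0) := by
      have h2 : Tendsto (fun n => dist (q (φ n)) l) atTop (𝓝 0) := by
        rw [← tendsto_iff_dist_tendsto_zero] at *
        exact hql
      simpa using hdist.add h2
    refine squeeze_zero (fun n => dist_nonneg) (fun n => dist_triangle _ _ _) hsum
  exact tendsto_iff_dist_tendsto_zero.2 this
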